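/- For every integer p ≥ 1 and real x with |x| < 1, the power series expansion of 1/((1-x)^2 (1-x^p)) has k-th coefficient b_k = (k + 1 - (p/2)·⌊k/p⌋)·(⌊k/p⌋ + 1). -/

import Mathlib

/-- The coefficient `b_k = (k + 1 - (p/2)⌊k/p⌋)(⌊k/p⌋ + 1)` as a real number,
    where `⌊k/p⌋` is natural division. -/
noncomputable def b (p k : ℕ) : ℝ :=
  ((k : ℝ) + 1 - (p : ℝ) / 2 * ((k / p : ℕ) : ℝ)) * (((k / p : ℕ) : ℝ) + 1)

lemma sum_dvd_range (p k : ℕ) (hp : 0 < p) (F : ℕ → ℝ) :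
    ∑ j ∈ Finset.range (k + 1), (if p ∣ (k - j) then F j else 0)
      = ∑ m ∈ Finset.range (k / p + 1), F (k - p * m) := by
  rw [Finset.sum_ite, Finset.sum_const_zero, add_zero]
  apply Finset.sum_nbij' (fun j => (k - j) / p) (fun m => k - p * m)
  · intro j hj
    simp only [Finset.mem_filter, Finset.mem_range] at hj ⊢
    obtain ⟨hj1, m, hm⟩ := hj
    have hjk : j ≤ k := Nat.lt_succ_iff.mp hj1
    rw [hm, Nat.mul_div_cancel_left _ hp]
    have : p * m ≤ k := hm ▸ Nat.sub_le k j
    exact Nat.lt_succ_of_le (Nat.le_div_iff_mul_le hp |>.mpr (by rw [mul_comm]; omega))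
  · intro m hm
    simp only [Finset.mem_range] at hm
    have hpm : p * m ≤ k := by
      have : m ≤ k / p := Nat.lt_succ_iff.mp hm
      calc p * m ≤ p * (k / p) := Nat.mul_le_mul_left p this
        _ ≤ k := Nat.mul_div_le k p
    simp only [Finset.mem_filter, Finset.mem_range]
    constructor
    · omega
    · exact ⟨m, by omega⟩
  · intro j hj
    simp only [Finset.mem_filter, Finset.mem_range] at hj
    obtain ⟨hj1, m, hm⟩ := hj
    have hjk : j ≤ k := Nat.lt_succ_iff.mp hj1
    rw [hm, Nat.mul_div_cancel_left _ hp]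
    omega
  · intro m hm
    simp only [Finset.mem_range] at hm
    have hpm : p * m ≤ k := by
      have : m ≤ k / p := Nat.lt_succ_iff.mp hm
      calc p * m ≤ p * (k / p) := Nat.mul_le_mul_left p this
        _ ≤ k := Nat.mul_div_le k p
    have : k - (k - p * m) = p * m := by omega
    rw [this, Nat.mul_div_cancel_left _ hp]
  · intro j hj
    simp only [Finset.mem_filter, Finset.mem_range] at hj
    obtain ⟨hj1, m, hm⟩ := hj
    congr 1
    rw [hm, Nat.mul_div_cancel_left _ hp]
    omega

theorem series_expansion (p : ℕ) (hp : 1 ≤ p) (x : ℝ) (hx : |x| < 1) :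
    HasSum (fun k : ℕ => b p k * x ^ k) (1 / ((1 - x) ^ 2 * (1 - x ^ p))) := by
  have hp0 : 0 < p := hp
  have hx1 : (1 : ℝ) - x ≠ 0 := by
    intro h
    rw [sub_eq_zero] at h
    rw [← h] at hx
    simp at hx
  have hxp : |x ^ p| < 1 := by
    rw [abs_pow]
    calc |x| ^ p ≤ |x| ^ 1 := pow_le_pow_of_le_one (abs_nonneg x) hx.le hp
      _ = |x| := pow_one _
      _ < 1 := hx
  have hxp1 : (1 : ℝ) - x ^ p ≠ 0 := by
    intro h
    rw [sub_eq_zero] at h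
    rw [← h] at hxp
    simp at hxp
  -- f n = (n+1) x^n
  set f : ℕ → ℝ := fun n => ((n : ℝ) + 1) * x ^ n with hfdef
  set g : ℕ → ℝ := fun m => if p ∣ m then x ^ m else 0 with hgdef
  have hf : HasSum f (1 / (1 - x) ^ 2) := by
    have h1 := hasSum_coe_mul_geometric_of_norm_lt_one (𝕜 := ℝ) (r := x) (by simpa using hx)
    have h2 := hasSum_geometric_of_abs_lt_one hx
    have h3 := h1.add h2
    have heq : (fun n : ℕ => (n : ℝ) * x ^ n + x ^ n) = f := by
      funext n; simp [hfdef]; ring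
    rw [heq] at h3
    convert h3 using 1
    · rfl
    field_simp
    ring
  have hg : HasSum g (1 / (1 - x ^ p)) := by
    have hgeo : HasSum (fun m : ℕ => (x ^ p) ^ m) (1 / (1 - x ^ p)) := by
      simpa [one_div] using hasSum_geometric_of_abs_lt_one hxp
    have hinj : Function.Injective (fun m : ℕ => p * m) := fun a b h => by
      simpa [Nat.mul_right_cancel_iff hp0, mul_comm] using
        Nat.eq_of_mul_eq_mul_left hp0 h
    have hvan : ∀ m, m ∉ Set.range (fun m : ℕ => p * m) → g m = 0 := by
      intro m hm
      simp only [Set.mem_range, not_exists] at hm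
      simp only [hgdef, ite_eq_right_iff]
      rintro ⟨c, hc⟩
      exact (hm c hc.symm).elim
    rw [← hinj.hasSum_iff hvan]
    convert hgeo using 1
    funext m
    simp [hgdef, Function.comp, pow_mul, Dvd.intro m rfl]
  -- norm summability
  have hfn : Summable fun n => ‖f n‖ := by
    have h1 := (hasSum_coe_mul_geometric_of_norm_lt_one (𝕜 := ℝ) (r := |x|)
      (by simpa using hx)).summable
    have h2 := (hasSum_geometric_of_abs_lt_one (r := |x|) (by simpa using hx)).summable
    have := h1.add h2
    apply this.congr
    intro n
    simp only [hfdef, Real.norm_eq_abs, abs_mul, abs_pow]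
    rw [abs_of_nonneg (by positivity : (0:ℝ) ≤ (n:ℝ) + 1)]
    ring
  have hgn : Summable fun m => ‖g m‖ := by
    apply Summable.of_nonneg_of_le (fun m => norm_nonneg _)
      (fun m => ?_) (summable_geometric_of_lt_one (abs_nonneg x) hx)
    simp only [hgdef]
    split
    · rw [Real.norm_eq_abs, abs_pow]
    · simp [abs_nonneg, pow_nonneg]
  -- Cauchy product
  have hsum : Summable fun k => ∑ kl ∈ Finset.HasAntidiagonal.antidiagonal k, f kl.1 * g kl.2 :=
    (summable_norm_sum_mul_antidiagonal_of_summable_norm hfn hgn).of_norm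
  have htsum : ∑' k, ∑ kl ∈ Finset.HasAntidiagonal.antidiagonal k, f kl.1 * g kl.2
      = 1 / ((1 - x) ^ 2 * (1 - x ^ p)) := by
    rw [← tsum_mul_tsum_eq_tsum_sum_antidiagonal_of_summable_norm hfn hgn,
      hf.tsum_eq, hg.tsum_eq]
    field_simp
  have hcauchy : HasSum (fun k => ∑ kl ∈ Finset.HasAntidiagonal.antidiagonal k, f kl.1 * g kl.2)
      (1 / ((1 - x) ^ 2 * (1 - x ^ p))) := htsum ▸ hsum.hasSum
  -- identify coefficients
  have hcoeff : ∀ k, ∑ kl ∈ Finset.HasAntidiagonal.antidiagonal k, f kl.1 * g kl.2 = b p k * x ^ k := by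
    intro k
    rw [Finset.Nat.sum_antidiagonal_eq_sum_range_succ (fun i j => f i * g j)]
    have step1 : ∀ j ∈ Finset.range (k + 1),
        f j * g (k - j) = (if p ∣ (k - j) then ((j : ℝ) + 1) * x ^ k else 0) := by
      intro j hj
      simp only [Finset.mem_range, Nat.lt_succ_iff] at hj
      simp only [hfdef, hgdef, mul_ite, mul_zero]
      congr 1
      rw [mul_assoc, ← pow_add, Nat.add_sub_cancel' hj]
    rw [Finset.sum_congr rfl step1,
      sum_dvd_range p k hp0 (fun j => ((j : ℝ) + 1) * x ^ k)]
    set q := k / p with hq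
    have hterm : ∀ m ∈ Finset.range (q + 1),
        ((↑(k - p * m) : ℝ) + 1) * x ^ k = ((k : ℝ) + 1 - (p : ℝ) * m) * x ^ k := by
      intro m hm
      simp only [Finset.mem_range, Nat.lt_succ_iff] at hm
      have hpm : p * m ≤ k := by
        calc p * m ≤ p * q := Nat.mul_le_mul_left p hm
          _ ≤ k := hq ▸ Nat.mul_div_le k p
      congr 1
      push_cast [Nat.cast_sub hpm]
      ring
    rw [Finset.sum_congr rfl hterm, ← Finset.sum_mul]
    congr 1
    rw [Finset.sum_sub_distrib, Finset.sum_const, Finset.card_range]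
    have hgauss : ∑ m ∈ Finset.range (q + 1), ((p : ℝ) * m)
        = (p : ℝ) * (q * (q + 1) / 2) := by
      rw [← Finset.mul_sum]
      congr 1
      have := Finset.sum_range_id_mul_two (q + 1)
      have hcast : ((∑ i ∈ Finset.range (q + 1), i : ℕ) : ℝ) * 2 = (q + 1) * q := by
        exact_mod_cast congrArg (Nat.cast : ℕ → ℝ) this
      push_cast at hcast ⊢
      linarith
    rw [hgauss, b]
    ring
  exact hcauchy.congr_fun fun k => (hcoeff k).symm
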